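/- Let P be a poset and Γ a standard closure operator whose lattice L_Γ of closed sets is, for every standard closure operator Γ' ≤ Γ, the target of a finite-meet-preserving canonical map Γ(-) : L_{Γ'} → L_Γ. Then L_Γ is a frame. -/
import Mathlib


variable {P : Type*} [PartialOrder P]

/-- Down-closure of a set. -/
def dcl (S : Set P) : Set P := {p | ∃ s ∈ S, p ≤ s}

/-- Principal downset. -/
def pd (p : P) : Set P := {q | q ≤ p}

/-- Standard closure operator: extensive, monotone, idempotent, with Γ({p}) = p↓. -/
def IsStdClosure (Γ : Set P → Set P) : Prop :=
  (∀ S, S ⊆ Γ S) ∧ (∀ S T : Set P, S ⊆ T → Γ S ⊆ Γ T) ∧ (∀ S, Γ (Γ S) = Γ S) ∧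
    ∀ p : P, Γ {p} = pd p

def IsClosedIn (Γ : Set P → Set P) (C : Set P) : Prop := Γ C = C

/-- Join-specification: all joins of members exist, and all singletons belong. -/
def IsJoinSpec (𝒰 : Set (Set P)) : Prop :=
  (∀ S ∈ 𝒰, ∃ x : P, IsLUB S x) ∧ ∀ p : P, {p} ∈ 𝒰

/-- 𝒰-ideal: down-closed and closed under joins of members of 𝒰. -/
def IsUIdeal (𝒰 : Set (Set P)) (I : Set P) : Prop :=
  IsLowerSet I ∧ ∀ S ∈ 𝒰, S ⊆ I → ∀ x : P, IsLUB S x → x ∈ I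

/-- The smallest 𝒰-ideal containing S. -/
def GammaU (𝒰 : Set (Set P)) (S : Set P) : Set P :=
  ⋂₀ {I : Set P | IsUIdeal 𝒰 I ∧ S ⊆ I}

/-- 𝒰⁺: sets whose join exists and lies in the 𝒰-ideal closure. -/
def UPlus (𝒰 : Set (Set P)) : Set (Set P) :=
  {S : Set P | ∃ x : P, IsLUB S x ∧ x ∈ GammaU 𝒰 S}

/-- Υ_𝒰(S) = { ⋁T : T ∈ 𝒰⁺, T ⊆ S↓ }. -/
def Upsilon (𝒰 : Set (Set P)) (S : Set P) : Set P :=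
  {x : P | ∃ T ∈ UPlus 𝒰, T ⊆ dcl S ∧ IsLUB T x}

/-- The complete lattice of 𝒰-ideals (meets = intersections, joins = closure of unions)
is a frame. -/
def IdealFrame (𝒰 : Set (Set P)) : Prop :=
  ∀ D : Set P, IsUIdeal 𝒰 D → ∀ 𝒞 : Set (Set P), (∀ C ∈ 𝒞, IsUIdeal 𝒰 C) →
    D ∩ GammaU 𝒰 (⋃₀ 𝒞) = GammaU 𝒰 (⋃ C ∈ 𝒞, D ∩ C)

/-- The complete lattice of Γ-closed sets is a frame. -/
def ClosFrame (Γ : Set P → Set P) : Prop :=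
  ∀ D : Set P, IsClosedIn Γ D → ∀ 𝒞 : Set (Set P), (∀ C ∈ 𝒞, IsClosedIn Γ C) →
    D ∩ Γ (⋃₀ 𝒞) = Γ (⋃ C ∈ 𝒞, D ∩ C)

theorem stmt2 (Γ : Set P → Set P) (hΓ : IsStdClosure Γ)
    (h : ∀ Γ' : Set P → Set P, IsStdClosure Γ' → (∀ S, Γ' S ⊆ Γ S) →
      ∀ C₁ C₂ : Set P, IsClosedIn Γ' C₁ → IsClosedIn Γ' C₂ →
        Γ (C₁ ∩ C₂) = Γ C₁ ∩ Γ C₂) :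
    ClosFrame Γ := by
  obtain ⟨hext, hmono, hidem, hsing⟩ := hΓ
  have hdcl : IsStdClosure (dcl (P := P)) := by
    refine ⟨fun S p hp => ⟨p, hp, le_rfl⟩, fun S T hST p ⟨s, hs, hps⟩ => ⟨s, hST hs, hps⟩,
      fun S => ?_, fun p => ?_⟩
    · apply subset_antisymm
      · rintro p ⟨q, ⟨s, hs, hqs⟩, hpq⟩
        exact ⟨s, hs, hpq.trans hqs⟩
      · exact fun p hp => ⟨p, hp, le_rfl⟩
    · ext q
      constructor
      · rintro ⟨s, hs, hqs⟩
        rw [Set.mem_singleton_iff] at hs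
        exact hs ▸ hqs
      · exact fun hq => ⟨p, rfl, hq⟩
  have hle : ∀ S : Set P, dcl S ⊆ Γ S := by
    rintro S p ⟨s, hs, hps⟩
    have : p ∈ pd s := hps
    rw [← hsing s] at this
    exact hmono _ _ (Set.singleton_subset_iff.mpr hs) this
  have key := h (dcl (P := P)) hdcl hle
  intro D hD 𝒞 h𝒞
  have hDd : IsClosedIn (dcl (P := P)) D := by
    apply subset_antisymm
    · intro p hp
      have := hle D hp
      rwa [hD] at this
    · exact fun p hp => ⟨p, hp, le_rfl⟩
  have hUd : IsClosedIn (dcl (P := P)) (⋃₀ 𝒞) := by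
    apply subset_antisymm
    · rintro p ⟨s, hs, hps⟩
      obtain ⟨C, hC, hsC⟩ := hs
      have : p ∈ Γ C := hle C ⟨s, hsC, hps⟩
      rw [h𝒞 C hC] at this
      exact ⟨C, hC, this⟩
    · exact fun p hp => ⟨p, hp, le_rfl⟩
  have hun : (⋃ C ∈ 𝒞, D ∩ C) = D ∩ ⋃₀ 𝒞 := by
    ext p
    simp only [Set.mem_iUnion, Set.mem_inter_iff, Set.mem_sUnion]
    tauto
  rw [hun, key D (⋃₀ 𝒞) hDd hUd, hD]
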